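/- Let H be an m×n real matrix, Q an m×m symmetric positive definite real matrix, Σ̄ an n×n symmetric positive definite real matrix, and let z, ĥ ∈ ℝᵐ and μ̄, μ_O ∈ ℝⁿ. For c > 0, define Σ(c) = (HᵀQ^(−1)H + (1/c)·I + Σ̄^(−1))^(−1) and the object-uncertainty-aware posterior mean μ(c) = μ̄ + Σ(c)·Hᵀ·Q^(−1)·(z − ĥ) + Σ(c)·((1/c)·I)·(μ_O − μ̄). Then lim_{c→∞} μ(c) = μ̄ + (HᵀQ^(−1)H + Σ̄^(−1))^(−1)·Hᵀ·Q^(−1)·(z − ĥ); in particular the object-uncertainty correction term Σ(c)·((1/c)·I)·(μ_O − μ̄) tends to 0, and the posterior mean reduces to the standard EKF update. -/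

import Mathlib

open Matrix Filter

/-- As the object-location covariance `Σ_O = c·I` grows without bound, the
object-uncertainty-aware posterior mean
`μ(c) = μ̄ + Σ(c) Hᵀ Q⁻¹ (z − ĥ) + Σ(c)((1/c)I)(μ_O − μ̄)`, with
`Σ(c) = (Hᵀ Q⁻¹ H + (1/c)I + Σ̄⁻¹)⁻¹`, tends to the standard EKF posterior mean
`μ̄ + (Hᵀ Q⁻¹ H + Σ̄⁻¹)⁻¹ Hᵀ Q⁻¹ (z − ĥ)`; in particular the object-uncertainty
correction term tends to `0`. -/
theorem posterior_mean_limit_object_uncertainty {m n : ℕ}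
    (H : Matrix (Fin m) (Fin n) ℝ) (Q : Matrix (Fin m) (Fin m) ℝ)
    (Sb : Matrix (Fin n) (Fin n) ℝ) (hQ : Q.PosDef) (hSb : Sb.PosDef)
    (z hhat : Fin m → ℝ) (mub muO : Fin n → ℝ) :
    let S : ℝ → Matrix (Fin n) (Fin n) ℝ := fun c =>
      (Hᵀ * Q⁻¹ * H + c⁻¹ • (1 : Matrix (Fin n) (Fin n) ℝ) + Sb⁻¹)⁻¹
    Tendsto
      (fun c : ℝ =>
        mub + (S c * Hᵀ * Q⁻¹) *ᵥ (z - hhat) +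
          (S c * (c⁻¹ • (1 : Matrix (Fin n) (Fin n) ℝ))) *ᵥ (muO - mub))
      atTop
      (nhds (mub + ((Hᵀ * Q⁻¹ * H + Sb⁻¹)⁻¹ * Hᵀ * Q⁻¹) *ᵥ (z - hhat))) ∧
    Tendsto
      (fun c : ℝ =>
        (S c * (c⁻¹ • (1 : Matrix (Fin n) (Fin n) ℝ))) *ᵥ (muO - mub))
      atTop (nhds 0) := by
  intro S
  -- the limiting matrix is positive definite, hence invertible
  have hPS : (Hᵀ * Q⁻¹ * H).PosSemidef := by
    have := hQ.inv.posSemidef.conjTranspose_mul_mul_same H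
    simpa using this
  have hA : (Hᵀ * Q⁻¹ * H + Sb⁻¹).PosDef := Matrix.PosDef.posSemidef_add hPS hSb.inv
  have hdet : (Hᵀ * Q⁻¹ * H + Sb⁻¹).det ≠ 0 := ne_of_gt hA.det_pos
  -- the inner matrix tends to the limiting matrix
  have hAc : Tendsto
      (fun c : ℝ => Hᵀ * Q⁻¹ * H + c⁻¹ • (1 : Matrix (Fin n) (Fin n) ℝ) + Sb⁻¹)
      atTop (nhds (Hᵀ * Q⁻¹ * H + Sb⁻¹)) := by
    have h1 : Tendsto
        (fun c : ℝ => Hᵀ * Q⁻¹ * H + c⁻¹ • (1 : Matrix (Fin n) (Fin n) ℝ))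
        atTop (nhds (Hᵀ * Q⁻¹ * H + (0 : ℝ) • (1 : Matrix (Fin n) (Fin n) ℝ))) :=
      tendsto_const_nhds.add (tendsto_inv_atTop_zero.smul_const _)
    have h2 : Tendsto (fun _ : ℝ => Sb⁻¹) atTop (nhds Sb⁻¹) := tendsto_const_nhds
    simpa using h1.add h2
  -- continuity of the inverse at the (invertible) limiting matrix
  have hcont : ContinuousAt Inv.inv (Hᵀ * Q⁻¹ * H + Sb⁻¹) := by
    refine continuousAt_matrix_inv _ ?_
    rw [Ring.inverse_eq_inv']
    exact continuousAt_inv₀ hdet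
  have hSc : Tendsto S atTop (nhds ((Hᵀ * Q⁻¹ * H + Sb⁻¹)⁻¹)) :=
    hcont.tendsto.comp hAc
  have hpair : Tendsto (fun c : ℝ => (S c, c⁻¹)) atTop
      (nhds ((Hᵀ * Q⁻¹ * H + Sb⁻¹)⁻¹, 0)) :=
    hSc.prodMk_nhds tendsto_inv_atTop_zero
  -- the correction term tends to zero
  have h2 : Tendsto
      (fun c : ℝ => (S c * (c⁻¹ • (1 : Matrix (Fin n) (Fin n) ℝ))) *ᵥ (muO - mub))
      atTop (nhds 0) := by
    have hF : Continuous (fun p : Matrix (Fin n) (Fin n) ℝ × ℝ =>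
        (p.1 * (p.2 • (1 : Matrix (Fin n) (Fin n) ℝ))) *ᵥ (muO - mub)) :=
      (continuous_fst.matrix_mul (continuous_snd.smul continuous_const)).matrix_mulVec
        continuous_const
    have := (hF.tendsto _).comp hpair
    simpa [Function.comp_def] using this
  refine ⟨?_, h2⟩
  have hF : Continuous (fun p : Matrix (Fin n) (Fin n) ℝ × ℝ =>
      mub + (p.1 * Hᵀ * Q⁻¹) *ᵥ (z - hhat) +
        (p.1 * (p.2 • (1 : Matrix (Fin n) (Fin n) ℝ))) *ᵥ (muO - mub)) :=
    (continuous_const.add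
      (((continuous_fst.matrix_mul continuous_const).matrix_mul
        continuous_const).matrix_mulVec continuous_const)).add
      ((continuous_fst.matrix_mul (continuous_snd.smul continuous_const)).matrix_mulVec
        continuous_const)
  have := (hF.tendsto _).comp hpair
  simpa [Function.comp_def] using this
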